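/- For every integer l ≥ 2, one has χ_{l,l} = (−1)^l·σ_{l,l}. -/

import Mathlib

open Finset

/-- The coefficient `σ_{l,j}` from the paper (there written `σ_{l,i+1}` with `j = i+1`):
`σ_{l,j} = (-1)^{j-1} Σ_{p=0}^{j-2} (-1)^{p+1} Σ_{q=0}^{p+1} (-1)^q C(j,q)(p+1-q)^{l-1}`. -/
def sigmaCoeff (l j : ℕ) : ℚ :=
  (-1) ^ (j - 1) * ∑ p ∈ Finset.range (j - 1), (-1 : ℚ) ^ (p + 1) *
    ∑ q ∈ Finset.range (p + 2), (-1 : ℚ) ^ q * (j.choose q : ℚ) * ((p + 1 - q : ℕ) : ℚ) ^ (l - 1)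

/-- The coefficient `χ_{l,j}` from the paper (there written `χ_{l,i+1}` with `j = i+1`):
`χ_{l,j} = (-1)^{j-l} Σ_{k=1}^{j-1} ((2^{j-1}-2^{j-1-k})/(k+1)) Σ_{m=0}^{k+1} (-1)^m C(k+1,m) m^l`. -/
def chiCoeff (l j : ℕ) : ℚ :=
  (-1) ^ (j - l) * ∑ k ∈ Finset.Icc 1 (j - 1),
    ((2 ^ (j - 1) - 2 ^ (j - 1 - k) : ℚ) / ((k : ℚ) + 1)) *
      ∑ m ∈ Finset.range (k + 2), (-1 : ℚ) ^ m * ((k + 1).choose m : ℚ) * (m : ℚ) ^ l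

/-- `(-1)^(M-n) = (-1)^M * (-1)^n` for `n ≤ M`. -/
lemma neg_one_pow_sub_q (M n : ℕ) (h : n ≤ M) :
    ((-1 : ℚ)) ^ (M - n) = (-1) ^ M * (-1) ^ n := by
  have h1 : (-1 : ℚ) ^ (M - n) * (-1) ^ n = (-1) ^ M := by
    rw [← pow_add, Nat.sub_add_cancel h]
  have h2 : (-1 : ℚ) ^ n * (-1) ^ n = 1 := by
    rw [← mul_pow]; norm_num
  calc (-1 : ℚ) ^ (M - n) = (-1 : ℚ) ^ (M - n) * ((-1) ^ n * (-1) ^ n) := by rw [h2, mul_one]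
    _ = (-1) ^ M * (-1) ^ n := by rw [← mul_assoc, h1]

/-- l-th finite difference of a monomial of degree `j < n` vanishes. -/
lemma alt_sum_pow (n : ℕ) : ∀ j < n,
    ∑ q ∈ Finset.range (n + 1), (-1 : ℚ) ^ q * (n.choose q : ℚ) * (q : ℚ) ^ j = 0 := by
  induction n with
  | zero => intro j hj; omega
  | succ n ih =>
    intro j hj
    match j with
    | 0 =>
      have := Int.alternating_sum_range_choose (n := n + 1)
      rw [if_neg (by omega)] at this
      have := congrArg (fun z : ℤ => (z : ℚ)) this
      push_cast at this
      simpa using this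
    | j + 1 =>
      rw [Finset.sum_range_succ']
      have hzero : (-1 : ℚ) ^ 0 * ((n+1).choose 0 : ℚ) * (0 : ℚ) ^ (j+1) = 0 := by
        simp
      rw [show ((0:ℕ):ℚ) = (0:ℚ) by norm_cast, hzero, add_zero]
      have key : ∀ q : ℕ, (-1 : ℚ) ^ (q+1) * ((n+1).choose (q+1) : ℚ) * ((q+1 : ℕ) : ℚ) ^ (j+1)
          = (-(n+1 : ℚ)) * ((-1) ^ q * (n.choose q : ℚ) * ((q : ℚ) + 1) ^ j) := by
        intro q
        have hc : ((n+1).choose (q+1) : ℚ) * ((q : ℚ) + 1) = ((n : ℚ) + 1) * (n.choose q : ℚ) := by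
          have := Nat.add_one_mul_choose_eq n q
          have := congrArg (fun z : ℕ => (z : ℚ)) this
          push_cast at this
          linarith [this]
        push_cast
        calc (-1 : ℚ) ^ (q+1) * ((n+1).choose (q+1) : ℚ) * ((q : ℚ) + 1) ^ (j+1)
            = (-1) * ((-1:ℚ)^q) * (((n+1).choose (q+1) : ℚ) * ((q:ℚ)+1)) * ((q : ℚ) + 1) ^ j := by
              rw [pow_succ, pow_succ]; ring
          _ = (-1) * ((-1:ℚ)^q) * (((n : ℚ) + 1) * (n.choose q : ℚ)) * ((q : ℚ) + 1) ^ j := by rw [hc]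
          _ = (-(n+1 : ℚ)) * ((-1) ^ q * (n.choose q : ℚ) * ((q : ℚ) + 1) ^ j) := by ring
      rw [Finset.sum_congr rfl (fun q _ => key q), ← Finset.mul_sum]
      have inner : ∑ q ∈ Finset.range (n+1), (-1 : ℚ) ^ q * (n.choose q : ℚ) * ((q : ℚ) + 1) ^ j = 0 := by
        have expand : ∀ q ∈ Finset.range (n+1),
            (-1 : ℚ) ^ q * (n.choose q : ℚ) * ((q : ℚ) + 1) ^ j
            = ∑ i ∈ Finset.range (j+1), (j.choose i : ℚ) * ((-1 : ℚ) ^ q * (n.choose q : ℚ) * (q : ℚ) ^ i) := by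
          intro q _
          rw [add_pow, Finset.mul_sum]
          apply Finset.sum_congr rfl
          intro i _
          rw [one_pow]
          ring
        rw [Finset.sum_congr rfl expand, Finset.sum_comm]
        apply Finset.sum_eq_zero
        intro i hi
        rw [← Finset.mul_sum, ih i (by simp at hi; omega), mul_zero]
      rw [inner, mul_zero]

/-- Hockey stick: `∑_{k<n} C(k,r) = C(n,r+1)`. -/
lemma sum_range_choose_eq (n r : ℕ) : ∑ k ∈ Finset.range n, k.choose r = n.choose (r + 1) := by
  induction n with
  | zero => simp
  | succ n ih => rw [Finset.sum_range_succ, ih, Nat.choose_succ_succ]; simp only [Nat.succ_eq_add_one]; omega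

/-- `∑_{k<n} 2^(n-1-k) C(k,r) = ∑_{j<n-r} C(n,j)`. -/
lemma sum_two_pow_choose (n : ℕ) : ∀ r, ∑ k ∈ Finset.range n, 2 ^ (n - 1 - k) * k.choose r
    = ∑ j ∈ Finset.range (n - r), n.choose j := by
  induction n with
  | zero => simp
  | succ n ih =>
    intro r
    rw [Finset.sum_range_succ]
    have h1 : ∑ k ∈ Finset.range n, 2 ^ (n + 1 - 1 - k) * k.choose r
        = 2 * ∑ k ∈ Finset.range n, 2 ^ (n - 1 - k) * k.choose r := by
      rw [Finset.mul_sum]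
      apply Finset.sum_congr rfl
      intro k hk
      simp only [Finset.mem_range] at hk
      rw [show n + 1 - 1 - k = (n - 1 - k) + 1 by omega, pow_succ]
      ring
    rw [h1, ih r]
    by_cases hr : r ≤ n
    · rw [show n + 1 - 1 - n = 0 by omega, pow_zero, one_mul,
        show n + 1 - r = (n - r) + 1 by omega, Finset.sum_range_succ']
      have e1 : ∑ j ∈ Finset.range (n - r), (n+1).choose (j+1)
          = ∑ j ∈ Finset.range (n - r), (n.choose j + n.choose (j+1)) :=
        Finset.sum_congr rfl (fun j _ => Nat.choose_succ_succ n j)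
      rw [e1, Finset.sum_add_distrib]
      have e3 : ∑ j ∈ Finset.range ((n - r) + 1), n.choose j
          = ∑ j ∈ Finset.range (n - r), n.choose (j+1) + 1 := by
        rw [Finset.sum_range_succ']; simp
      have e4 : ∑ j ∈ Finset.range ((n - r) + 1), n.choose j
          = ∑ j ∈ Finset.range (n - r), n.choose j + n.choose r := by
        rw [Finset.sum_range_succ, Nat.choose_symm hr]
      have e5 : (n+1).choose 0 = 1 := rfl
      omega
    · have hc : n.choose r = 0 := Nat.choose_eq_zero_of_lt (by omega)
      simp [hc, show n - r = 0 by omega, show n + 1 - r = 0 by omega]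

lemma tri_swap (f : ℕ → ℕ → ℚ) (N : ℕ) :
    ∑ p ∈ Finset.range N, ∑ n ∈ Finset.range (p + 2), f p n
      = ∑ n ∈ Finset.range (N + 1), ∑ p ∈ Finset.Ico (n - 1) N, f p n := by
  induction N with
  | zero => simp
  | succ N ih =>
    rw [Finset.sum_range_succ, ih]
    have key : ∀ n ∈ Finset.range (N + 2),
        ∑ p ∈ Finset.Ico (n - 1) (N + 1), f p n
          = ∑ p ∈ Finset.Ico (n - 1) N, f p n + f N n := by
      intro n hn
      simp only [Finset.mem_range] at hn
      exact Finset.sum_Ico_succ_top (by omega) _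
    rw [Finset.sum_congr rfl key, Finset.sum_add_distrib]
    congr 1
    rw [Finset.sum_range_succ _ (N + 1)]
    simp

lemma sigma_side (L : ℕ) :
    (-1 : ℚ) ^ (L + 2) * sigmaCoeff (L + 2) (L + 2)
      = ∑ r ∈ Finset.range (L + 2), (-1 : ℚ) ^ r * ((r : ℚ) + 1) ^ (L + 1) *
          ∑ j ∈ Finset.range (L + 1 - r), ((L + 2).choose j : ℚ) := by
  rw [sigmaCoeff]
  have hsign : (-1 : ℚ) ^ (L + 2) * (-1 : ℚ) ^ (L + 2 - 1) = -1 := by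
    rw [show L + 2 - 1 = L + 1 from rfl, ← pow_add]
    exact Odd.neg_one_pow ⟨L + 1, by ring⟩
  rw [← mul_assoc, hsign, show L + 2 - 1 = L + 1 from rfl]
  -- Step: -∑_p (-1)^{p+1} T p = ∑_p ∑_{n} F p n
  have step1 : -(∑ p ∈ Finset.range (L + 1), (-1 : ℚ) ^ (p + 1) *
      ∑ q ∈ Finset.range (p + 2), (-1 : ℚ) ^ q * ((L+2).choose q : ℚ) * ((p + 1 - q : ℕ) : ℚ) ^ (L + 1))
      = ∑ p ∈ Finset.range (L + 1), ∑ n ∈ Finset.range (p + 2),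
          (-1 : ℚ) ^ (n + 1) * ((L+2).choose (p + 1 - n) : ℚ) * (n : ℚ) ^ (L + 1) := by
    rw [neg_eq_iff_eq_neg, ← Finset.sum_neg_distrib]
    apply Finset.sum_congr rfl
    intro p _
    -- reflect the q-sum
    have hrefl := Finset.sum_range_reflect
      (fun q => (-1 : ℚ) ^ q * ((L+2).choose q : ℚ) * ((p + 1 - q : ℕ) : ℚ) ^ (L + 1)) (p + 2)
    rw [show (-1 : ℚ) ^ (p + 1) * ∑ q ∈ Finset.range (p + 2), (-1 : ℚ) ^ q * ((L+2).choose q : ℚ) *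
          ((p + 1 - q : ℕ) : ℚ) ^ (L + 1)
        = (-1 : ℚ) ^ (p + 1) * ∑ n ∈ Finset.range (p + 2), (-1 : ℚ) ^ (p + 2 - 1 - n) *
          ((L+2).choose (p + 2 - 1 - n) : ℚ) * ((p + 1 - (p + 2 - 1 - n) : ℕ) : ℚ) ^ (L + 1)
      from by rw [hrefl]]
    rw [Finset.mul_sum, ← Finset.sum_neg_distrib]
    apply Finset.sum_congr rfl
    intro n hn
    simp only [Finset.mem_range] at hn
    have hn' : n ≤ p + 1 := by omega
    rw [show p + 2 - 1 - n = p + 1 - n from rfl,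
      show p + 1 - (p + 1 - n) = n from Nat.sub_sub_self hn',
      neg_one_pow_sub_q (p + 1) n hn']
    have h4 : ((-1 : ℚ)) ^ (p + 1) * ((-1 : ℚ)) ^ (p + 1) = 1 := by
      rw [← pow_add]; exact Even.neg_one_pow ⟨p + 1, by ring⟩
    linear_combination (((L+2).choose (p + 1 - n) : ℚ) * ((n : ℕ) : ℚ) ^ (L + 1) * (-1 : ℚ) ^ n) * h4
  rw [neg_one_mul, step1, tri_swap]
  -- now ∑_{n∈range(L+2)} ∑_{p∈Ico (n-1) (L+1)} ...
  rw [Finset.sum_range_succ' _ (L + 1)]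
  have hzero : ∑ p ∈ Finset.Ico (0 - 1) (L + 1),
      (-1 : ℚ) ^ (0 + 1) * ((L+2).choose (p + 1 - 0) : ℚ) * ((0 : ℕ) : ℚ) ^ (L + 1) = 0 := by
    apply Finset.sum_eq_zero
    intro p _
    norm_num
  rw [hzero, add_zero]
  conv_rhs => rw [Finset.sum_range_succ, show L + 1 - (L + 1) = 0 from by omega,
    Finset.sum_range_zero, mul_zero, add_zero]
  apply Finset.sum_congr rfl
  intro r hr
  -- term at n = r+1
  have e1 : ∑ p ∈ Finset.Ico (r + 1 - 1) (L + 1),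
      (-1 : ℚ) ^ (r + 1 + 1) * ((L+2).choose (p + 1 - (r + 1)) : ℚ) * ((r + 1 : ℕ) : ℚ) ^ (L + 1)
      = (-1 : ℚ) ^ (r + 2) * ((r : ℚ) + 1) ^ (L + 1) *
        ∑ p ∈ Finset.Ico r (L + 1), ((L+2).choose (p - r) : ℚ) := by
    rw [Finset.mul_sum]
    apply Finset.sum_congr rfl
    intro p _
    rw [show p + 1 - (r + 1) = p - r from Nat.succ_sub_succ p r]
    push_cast
    ring
  rw [e1]
  have e2 : ∑ p ∈ Finset.Ico r (L + 1), ((L+2).choose (p - r) : ℚ)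
      = ∑ j ∈ Finset.range (L + 1 - r), ((L+2).choose j : ℚ) := by
    rw [Finset.sum_Ico_eq_sum_range]
    apply Finset.sum_congr rfl
    intro j _
    rw [show r + j - r = j from by omega]
  rw [e2]
  have e3 : (-1 : ℚ) ^ (r + 2) = (-1 : ℚ) ^ r := by
    rw [pow_add]; norm_num
  rw [e3]

lemma chi_side (L : ℕ) :
    chiCoeff (L + 2) (L + 2)
      = ∑ r ∈ Finset.range (L + 2), (-1 : ℚ) ^ (r + 1) * ((r : ℚ) + 1) ^ (L + 1) *
          ∑ k ∈ Finset.Icc 1 (L + 1), ((2 : ℚ) ^ (L + 1) - 2 ^ (L + 1 - k)) * (k.choose r : ℚ) := by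
  rw [chiCoeff, show L + 2 - (L + 2) = 0 from by omega, pow_zero, one_mul,
    show L + 2 - 1 = L + 1 from rfl]
  have stepk : ∀ k ∈ Finset.Icc 1 (L + 1),
      ((2 ^ (L + 1) - 2 ^ (L + 1 - k) : ℚ) / ((k : ℚ) + 1)) *
        ∑ m ∈ Finset.range (k + 2), (-1 : ℚ) ^ m * ((k + 1).choose m : ℚ) * (m : ℚ) ^ (L + 2)
      = ∑ r ∈ Finset.range (L + 2), ((2 : ℚ) ^ (L + 1) - 2 ^ (L + 1 - k)) *
          ((-1 : ℚ) ^ (r + 1) * (k.choose r : ℚ) * ((r : ℚ) + 1) ^ (L + 1)) := by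
    intro k hk
    simp only [Finset.mem_Icc] at hk
    have inner : ∑ m ∈ Finset.range (k + 2), (-1 : ℚ) ^ m * ((k + 1).choose m : ℚ) * (m : ℚ) ^ (L + 2)
        = ((k : ℚ) + 1) * ∑ r ∈ Finset.range (k + 1),
            (-1 : ℚ) ^ (r + 1) * (k.choose r : ℚ) * ((r : ℚ) + 1) ^ (L + 1) := by
      rw [Finset.sum_range_succ']
      have h0 : (-1 : ℚ) ^ 0 * ((k + 1).choose 0 : ℚ) * ((0 : ℕ) : ℚ) ^ (L + 2) = 0 := by
        norm_num
      rw [h0, add_zero, Finset.mul_sum]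
      apply Finset.sum_congr rfl
      intro r _
      have hc : (((k + 1).choose (r + 1) : ℕ) : ℚ) * ((r : ℚ) + 1) = ((k : ℚ) + 1) * (k.choose r : ℚ) := by
        have h := Nat.add_one_mul_choose_eq k r
        have h2 := congrArg (fun z : ℕ => (z : ℚ)) h
        push_cast at h2
        linarith [h2]
      push_cast
      calc (-1 : ℚ) ^ (r + 1) * (((k + 1).choose (r + 1) : ℕ) : ℚ) * ((r : ℚ) + 1) ^ (L + 2)
          = (-1 : ℚ) ^ (r + 1) * ((((k + 1).choose (r + 1) : ℕ) : ℚ) * ((r : ℚ) + 1)) *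
              ((r : ℚ) + 1) ^ (L + 1) := by rw [pow_succ]; ring
        _ = (-1 : ℚ) ^ (r + 1) * (((k : ℚ) + 1) * (k.choose r : ℚ)) * ((r : ℚ) + 1) ^ (L + 1) := by
              rw [hc]
        _ = ((k : ℚ) + 1) * ((-1 : ℚ) ^ (r + 1) * (k.choose r : ℚ) * ((r : ℚ) + 1) ^ (L + 1)) := by
              ring
    rw [inner]
    have hb : ((k : ℚ) + 1) ≠ 0 := by positivity
    rw [div_mul_eq_mul_div, mul_comm ((2 : ℚ) ^ (L + 1) - 2 ^ (L + 1 - k)) _, mul_assoc,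
      mul_comm ((k : ℚ) + 1) _, mul_div_assoc, div_self hb, mul_one, Finset.sum_mul]
    -- pad range (k+1) to range (L+2)
    have pad : ∑ r ∈ Finset.range (k + 1),
        (-1 : ℚ) ^ (r + 1) * (k.choose r : ℚ) * ((r : ℚ) + 1) ^ (L + 1) *
          ((2 : ℚ) ^ (L + 1) - 2 ^ (L + 1 - k))
        = ∑ r ∈ Finset.range (L + 2),
        (-1 : ℚ) ^ (r + 1) * (k.choose r : ℚ) * ((r : ℚ) + 1) ^ (L + 1) *
          ((2 : ℚ) ^ (L + 1) - 2 ^ (L + 1 - k)) := by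
      apply Finset.sum_subset
      · exact Finset.range_subset_range.mpr (by omega)
      · intro r _ hr
        simp only [Finset.mem_range, not_lt] at hr
        rw [Nat.choose_eq_zero_of_lt (by omega)]
        norm_num
    rw [pad]
    apply Finset.sum_congr rfl
    intro r _
    ring
  rw [Finset.sum_congr rfl stepk, Finset.sum_comm]
  apply Finset.sum_congr rfl
  intro r _
  rw [Finset.mul_sum]
  apply Finset.sum_congr rfl
  intro k _
  ring

lemma key_id (L r : ℕ) (hr : r < L + 2) :
    (∑ k ∈ Finset.Icc 1 (L + 1), ((2 : ℚ) ^ (L + 1) - 2 ^ (L + 1 - k)) * (k.choose r : ℚ))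
      + ∑ j ∈ Finset.range (L + 1 - r), ((L + 2).choose j : ℚ)
    = ((2 : ℚ) ^ (L + 1) - 1) * ((L + 2).choose (r + 1) : ℚ) := by
  have hIco : Finset.Ico 1 (L + 2) = Finset.Icc 1 (L + 1) := by
    rw [← Finset.Ico_add_one_right_eq_Icc]; rfl
  have hW : ∑ k ∈ Finset.range (L + 2), ((2 : ℚ) ^ (L + 1) - 2 ^ (L + 1 - k)) * (k.choose r : ℚ)
      = ∑ k ∈ Finset.Icc 1 (L + 1), ((2 : ℚ) ^ (L + 1) - 2 ^ (L + 1 - k)) * (k.choose r : ℚ) := by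
    rw [Finset.range_eq_Ico, Finset.sum_eq_sum_Ico_succ_bot (by omega), hIco]
    norm_num
  rw [← hW]
  have hsplit : ∑ k ∈ Finset.range (L + 2), ((2 : ℚ) ^ (L + 1) - 2 ^ (L + 1 - k)) * (k.choose r : ℚ)
      = (2 : ℚ) ^ (L + 1) * (∑ k ∈ Finset.range (L + 2), (k.choose r : ℚ))
        - ∑ k ∈ Finset.range (L + 2), (2 : ℚ) ^ (L + 1 - k) * (k.choose r : ℚ) := by
    rw [Finset.mul_sum, ← Finset.sum_sub_distrib]
    apply Finset.sum_congr rfl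
    intro k _
    ring
  rw [hsplit]
  have hhs : (∑ k ∈ Finset.range (L + 2), (k.choose r : ℚ)) = (((L + 2).choose (r + 1) : ℕ) : ℚ) := by
    have h := congrArg (fun z : ℕ => (z : ℚ)) (sum_range_choose_eq (L + 2) r)
    push_cast at h
    exact h
  have hA : ∑ k ∈ Finset.range (L + 2), (2 : ℚ) ^ (L + 1 - k) * (k.choose r : ℚ)
      = ∑ j ∈ Finset.range (L + 2 - r), ((L + 2).choose j : ℚ) := by
    have h := congrArg (fun z : ℕ => (z : ℚ)) (sum_two_pow_choose (L + 2) r)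
    push_cast at h
    rw [← h]
  rw [hhs, hA, show L + 2 - r = (L + 1 - r) + 1 from by omega, Finset.sum_range_succ]
  have hsym : (((L + 2).choose (L + 1 - r) : ℕ) : ℚ) = (((L + 2).choose (r + 1) : ℕ) : ℚ) := by
    rw [show L + 1 - r = L + 2 - (r + 1) from by omega, Nat.choose_symm (by omega)]
  rw [hsym]
  ring


/-- For `l ≥ 2`, `χ_{l,l} = (-1)^l σ_{l,l}`. -/
theorem chi_ll_eq_sign_sigma_ll (l : ℕ) (hl : 2 ≤ l) :
    chiCoeff l l = (-1) ^ l * sigmaCoeff l l := by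
  obtain ⟨L, rfl⟩ : ∃ L, l = L + 2 := ⟨l - 2, by omega⟩
  rw [chi_side L, sigma_side L, ← sub_eq_zero, ← Finset.sum_sub_distrib]
  have hterm : ∀ r ∈ Finset.range (L + 2),
      ((-1 : ℚ) ^ (r + 1) * ((r : ℚ) + 1) ^ (L + 1) *
          ∑ k ∈ Finset.Icc 1 (L + 1), ((2 : ℚ) ^ (L + 1) - 2 ^ (L + 1 - k)) * (k.choose r : ℚ))
        - ((-1 : ℚ) ^ r * ((r : ℚ) + 1) ^ (L + 1) *
          ∑ j ∈ Finset.range (L + 1 - r), ((L + 2).choose j : ℚ))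
      = ((2 : ℚ) ^ (L + 1) - 1) *
          ((-1 : ℚ) ^ (r + 1) * ((L + 2).choose (r + 1) : ℚ) * ((r : ℚ) + 1) ^ (L + 1)) := by
    intro r hr
    have hk := key_id L r (Finset.mem_range.mp hr)
    linear_combination ((-1 : ℚ) ^ (r + 1) * ((r : ℚ) + 1) ^ (L + 1)) * hk
  rw [Finset.sum_congr rfl hterm, ← Finset.mul_sum]
  have halt := alt_sum_pow (L + 2) (L + 1) (by omega)
  rw [Finset.sum_range_succ'] at halt
  push_cast at halt
  rw [zero_pow (by omega : L + 1 ≠ 0), mul_zero, add_zero] at halt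
  rw [halt, mul_zero]
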